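/- Let σ be the right cyclic shift (12⋯r) in S_r, r > 1. Then the Bruhat interval {τ ∈ S_r : τ ≤ σ} is isomorphic as a poset to the Boolean lattice {0,1}^{r-1}, and the maximal elements strictly below σ are exactly σ T_{i,r} for i ∈ [r-1]. -/

import Mathlib

namespace SmoothPerm

variable {n : ℕ}

/-- Bruhat order on `S_n`, via the standard counting criterion. -/
def bruhatLE (τ σ : Equiv.Perm (Fin n)) : Prop :=
  ∀ i j : Fin n,
    (Finset.univ.filter (fun x => x ≤ i ∧ σ x ≤ j)).card ≤
      (Finset.univ.filter (fun x => x ≤ i ∧ τ x ≤ j)).card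

/-- Number of inversions (the length ℓ(σ)). -/
def invNum (σ : Equiv.Perm (Fin n)) : ℕ :=
  (Finset.univ.filter (fun p : Fin n × Fin n => p.1 < p.2 ∧ σ p.2 < σ p.1)).card

def isTransposition (τ : Equiv.Perm (Fin n)) : Prop :=
  ∃ i j : Fin n, i < j ∧ τ = Equiv.swap i j

/-- σ is smooth iff ℓ(σ) equals the number of transpositions Bruhat-below σ. -/
def smooth (σ : Equiv.Perm (Fin n)) : Prop :=
  invNum σ = Nat.card {τ : Equiv.Perm (Fin n) // isTransposition τ ∧ bruhatLE τ σ}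

def avoids4231 (σ : Equiv.Perm (Fin n)) : Prop :=
  ¬ ∃ a b c d : Fin n, a < b ∧ b < c ∧ c < d ∧ σ d < σ b ∧ σ b < σ c ∧ σ c < σ a

/-- covexillary = 3412-avoiding. -/
def covexillary (σ : Equiv.Perm (Fin n)) : Prop :=
  ¬ ∃ a b c d : Fin n, a < b ∧ b < c ∧ c < d ∧ σ c < σ d ∧ σ d < σ a ∧ σ a < σ b

def avoids321 (σ : Equiv.Perm (Fin n)) : Prop :=
  ¬ ∃ a b c : Fin n, a < b ∧ b < c ∧ σ c < σ b ∧ σ b < σ a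

/-- The 3-cycle i ↦ j ↦ k ↦ i. -/
def Rc (i j k : Fin n) : Equiv.Perm (Fin n) := Equiv.swap i k * Equiv.swap i j

def Lc (i j k : Fin n) : Equiv.Perm (Fin n) := (Rc i j k)⁻¹

def inC23 (τ : Equiv.Perm (Fin n)) : Prop :=
  isTransposition τ ∨ ∃ i j k : Fin n, i < j ∧ j < k ∧ (τ = Rc i j k ∨ τ = Lc i j k)

/-- The 2-3-table of σ. -/
def Ctab (σ : Equiv.Perm (Fin n)) : Set (Equiv.Perm (Fin n)) :=
  {τ | inC23 τ ∧ bruhatLE τ σ}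

def admissible (A : Set (Equiv.Perm (Fin n))) : Prop :=
  (∀ τ ∈ A, inC23 τ) ∧
  (∀ σ ∈ A, ∀ τ : Equiv.Perm (Fin n), inC23 τ → bruhatLE τ σ → τ ∈ A) ∧
  (∀ i j k l : Fin n, i < j → j < l → i < k → k < l →
    Rc i j l ∈ A → Lc i k l ∈ A → Equiv.swap i l ∈ A) ∧
  (∀ i j k : Fin n, i < j → j < k →
    Equiv.swap i j ∈ A → Equiv.swap j k ∈ A → (Rc i j k ∈ A ∨ Lc i j k ∈ A))

def isWedge (A : Set (Equiv.Perm (Fin n))) (i j : Fin n) : Prop :=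
  i < j ∧ Equiv.swap i j ∈ A ∧
  (∀ i' : Fin n, (i' : ℕ) + 1 = (i : ℕ) → Equiv.swap i' i ∉ A) ∧
  (∀ j' : Fin n, (j : ℕ) + 1 = (j' : ℕ) → Rc i j j' ∉ A)

def derivedSet (A : Set (Equiv.Perm (Fin n))) (i j : Fin n) : Set (Equiv.Perm (Fin n)) :=
  A \ ({Equiv.swap i j} ∪ {τ | ∃ k, j < k ∧ τ = Lc i j k} ∪
       {τ | ∃ k, i < k ∧ k < j ∧ τ = Rc i k j})

def strictTotalOn (S : Set (Equiv.Perm (Fin n)))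
    (r : Equiv.Perm (Fin n) → Equiv.Perm (Fin n) → Prop) : Prop :=
  (∀ x ∈ S, ¬ r x x) ∧
  (∀ x ∈ S, ∀ y ∈ S, ∀ z ∈ S, r x y → r y z → r x z) ∧
  (∀ x ∈ S, ∀ y ∈ S, x ≠ y → r x y ∨ r y x)

def compatibleOrder (A : Set (Equiv.Perm (Fin n)))
    (r : Equiv.Perm (Fin n) → Equiv.Perm (Fin n) → Prop) : Prop :=
  (∀ i j k : Fin n, i < j → j < k → Rc i j k ∈ A → Lc i j k ∉ A →
    r (Equiv.swap i j) (Equiv.swap j k)) ∧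
  (∀ i j k : Fin n, i < j → j < k → Lc i j k ∈ A → Rc i j k ∉ A →
    r (Equiv.swap j k) (Equiv.swap i j)) ∧
  (∀ i j k : Fin n, i < j → j < k → Equiv.swap i k ∈ A →
    ((r (Equiv.swap i j) (Equiv.swap i k) ∧ r (Equiv.swap i k) (Equiv.swap j k)) ∨
     (r (Equiv.swap j k) (Equiv.swap i k) ∧ r (Equiv.swap i k) (Equiv.swap i j))))

def coversIn (S : Set (Equiv.Perm (Fin n)))
    (r : Equiv.Perm (Fin n) → Equiv.Perm (Fin n) → Prop)
    (x y : Equiv.Perm (Fin n)) : Prop :=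
  x ∈ S ∧ y ∈ S ∧ r x y ∧ ∀ z ∈ S, ¬ (r x z ∧ r z y)

/-- m_σ(i) = max σ([i]). -/
def maxS (σ : Equiv.Perm (Fin n)) (i : Fin n) : Fin n :=
  ((Finset.univ.filter (fun x => x ≤ i)).image (fun x => σ x)).max'
    ⟨σ i, Finset.mem_image_of_mem _ (by simp)⟩

/-- The cyclic shift i → i+1 → ⋯ → j → i. -/
def Rseg (i j : Fin n) : Equiv.Perm (Fin n) :=
  ((List.finRange n).filter (fun x => decide (i ≤ x ∧ x ≤ j))).formPerm

def definedByInclusions (σ : Equiv.Perm (Fin n)) : Prop :=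
  ∀ τ : Equiv.Perm (Fin n),
    (∀ x, maxS τ x ≤ maxS σ x) → (∀ x, maxS τ⁻¹ x ≤ maxS σ⁻¹ x) → bruhatLE τ σ

section Aux

variable {r : ℕ}

def small (τ : Equiv.Perm (Fin r)) : Prop := ∀ x : Fin r, (τ x : ℕ) ≤ (x : ℕ) + 1

lemma card_le_filter (i : Fin r) :
    (Finset.univ.filter fun x : Fin r => x ≤ i).card = (i:ℕ)+1 := by
  rw [show (Finset.univ.filter fun x : Fin r => x ≤ i) = Finset.Iic i by ext x; simp]
  exact Fin.card_Iic i

lemma card_lt_filter (i : Fin r) :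
    (Finset.univ.filter fun x : Fin r => x < i).card = (i:ℕ) := by
  rw [show (Finset.univ.filter fun x : Fin r => x < i) = Finset.Iio i by ext x; simp]
  exact Fin.card_Iio i

lemma card_preim (ρ : Equiv.Perm (Fin r)) (j : Fin r) :
    (Finset.univ.filter fun x => ρ x ≤ j).card = (j:ℕ)+1 := by
  rw [show (Finset.univ.filter fun x => ρ x ≤ j) = (Finset.Iic j).image ρ.symm by
    ext x
    simp only [Finset.mem_filter, Finset.mem_univ, true_and, Finset.mem_image, Finset.mem_Iic]
    constructor
    · intro h; exact ⟨ρ x, h, by simp⟩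
    · rintro ⟨y, hy, rfl⟩; simpa using hy]
  rw [Finset.card_image_of_injective _ (Equiv.injective _), Fin.card_Iic]

lemma noesc (τ : Equiv.Perm (Fin r)) {m : ℕ}
    (h : ∀ z : Fin r, (z:ℕ) ≤ m → (τ z : ℕ) ≤ m) :
    ∀ x : Fin r, (τ x : ℕ) ≤ m → (x:ℕ) ≤ m := by
  classical
  intro x hx
  set S := Finset.univ.filter fun z : Fin r => (z:ℕ) ≤ m with hS
  have him : S.image τ ⊆ S := by
    intro y hy
    simp only [Finset.mem_image] at hy
    obtain ⟨z, hz, rfl⟩ := hy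
    simp only [hS, Finset.mem_filter, Finset.mem_univ, true_and] at hz ⊢
    exact h z hz
  have hcard : (S.image τ).card = S.card := Finset.card_image_of_injective _ τ.injective
  have heq : S.image τ = S := Finset.eq_of_subset_of_card_le him (le_of_eq hcard.symm)
  have hmem : τ x ∈ S.image τ := by
    rw [heq]; simp only [hS, Finset.mem_filter, Finset.mem_univ, true_and]; exact hx
  obtain ⟨z, hz, hzx⟩ := Finset.mem_image.mp hmem
  have hzx' := τ.injective hzx
  subst hzx'
  simpa [hS] using hz

lemma noesc' {τ : Equiv.Perm (Fin r)} (hτ : small τ) {k : Fin r}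
    (hk : (τ k : ℕ) ≤ (k:ℕ)) : ∀ x : Fin r, (τ x : ℕ) ≤ (k:ℕ) → (x:ℕ) ≤ (k:ℕ) := by
  apply noesc
  intro z hz
  have h1 := hτ z
  rcases Nat.lt_or_ge ((τ z : ℕ)) ((k:ℕ)+1) with h|h
  · omega
  · have hzk : z = k := Fin.ext (by omega)
    subst hzk; omega

lemma run_of_escape {τ : Equiv.Perm (Fin r)} (hτ : small τ) {y : Fin r} {j : ℕ}
    (hy : (τ y : ℕ) ≤ j) : ∀ k : Fin r, j ≤ (k:ℕ) → (k:ℕ) < (y:ℕ) → (τ k : ℕ) = (k:ℕ)+1 := by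
  intro k hjk hky
  by_contra hne
  have hk : (τ k : ℕ) ≤ (k:ℕ) := by have := hτ k; omega
  have := noesc' hτ hk y (le_trans hy hjk)
  omega

lemma filter_lower {τ : Equiv.Perm (Fin r)} (hτ : small τ) (i j : Fin r) (hji : j ≤ i) :
    (j:ℕ) ≤ (Finset.univ.filter fun x => x ≤ i ∧ τ x ≤ j).card := by
  classical
  have hAB : (Finset.univ.filter fun x : Fin r => x ≤ i ∧ τ x ≤ j) ∪
      (Finset.univ.filter fun x : Fin r => ¬ x ≤ i ∧ τ x ≤ j) =
      Finset.univ.filter fun x => τ x ≤ j := by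
    ext x
    simp only [Finset.mem_union, Finset.mem_filter, Finset.mem_univ, true_and]
    tauto
  have hd : Disjoint (Finset.univ.filter fun x : Fin r => x ≤ i ∧ τ x ≤ j)
      (Finset.univ.filter fun x : Fin r => ¬ x ≤ i ∧ τ x ≤ j) := by
    rw [Finset.disjoint_left]
    intro x hx hx'
    simp only [Finset.mem_filter, Finset.mem_univ, true_and] at hx hx'
    exact hx'.1 hx.1
  have hQ : (Finset.univ.filter fun x : Fin r => ¬ x ≤ i ∧ τ x ≤ j).card ≤ 1 := by
    apply Finset.card_le_one.mpr
    intro a ha b hb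
    have hj : (j:ℕ) ≤ (i:ℕ) := hji
    simp only [Finset.mem_filter, Finset.mem_univ, true_and, not_le, Fin.lt_def, Fin.le_def] at ha hb
    by_contra hab
    rcases lt_trichotomy (a:ℕ) (b:ℕ) with h|h|h
    · have h2 := run_of_escape hτ hb.2 a (by omega) h
      have := ha.2
      omega
    · exact hab (Fin.ext h)
    · have h2 := run_of_escape hτ ha.2 b (by omega) h
      have := hb.2
      omega
  have hcard := Finset.card_union_of_disjoint hd
  rw [hAB, card_preim] at hcard
  omega

lemma finRotate_val {r : ℕ} (hr : 1 < r) (x : Fin r) :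
    ((finRotate r x : Fin r) : ℕ) = if (x:ℕ)+1 < r then (x:ℕ)+1 else 0 := by
  obtain ⟨n, rfl⟩ : ∃ n, r = n+1 := ⟨r-1, by omega⟩
  rw [finRotate_succ_apply]
  rcases Nat.lt_or_ge ((x:ℕ)+1) (n+1) with h|h
  · rw [if_pos h, Fin.val_add_one]
    have hx : x ≠ Fin.last n := by
      intro hx; subst hx; simp [Fin.last] at h
    simp [hx]
  · have hx : x = Fin.last n := Fin.ext (by simp only [Fin.val_last]; omega)
    rw [if_neg (by omega), hx, Fin.val_add_one]
    simp

lemma bruhat_of_small {r : ℕ} (hr : 1 < r) {τ : Equiv.Perm (Fin r)} (hτ : small τ) :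
    bruhatLE τ (finRotate r) := by
  intro i j
  rcases Nat.lt_or_ge (i:ℕ) (r-1) with hi | hi
  · rcases Nat.lt_or_ge (i:ℕ) (j:ℕ) with hij | hij
    · have hfull : (Finset.univ.filter fun x => x ≤ i ∧ τ x ≤ j) =
          Finset.univ.filter fun x : Fin r => x ≤ i := by
        ext x
        simp only [Finset.mem_filter, Finset.mem_univ, true_and, and_iff_left_iff_imp, Fin.le_def]
        intro hx
        have := hτ x
        omega
      rw [hfull, card_le_filter]
      calc (Finset.univ.filter fun x => x ≤ i ∧ finRotate r x ≤ j).card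
          ≤ (Finset.univ.filter fun x : Fin r => x ≤ i).card := by
            apply Finset.card_le_card
            intro x hx
            simp only [Finset.mem_filter, Finset.mem_univ, true_and] at hx ⊢
            exact hx.1
        _ = (i:ℕ)+1 := card_le_filter i
    · have hσ : (Finset.univ.filter fun x => x ≤ i ∧ finRotate r x ≤ j) =
          Finset.univ.filter fun x : Fin r => x < j := by
        ext x
        simp only [Finset.mem_filter, Finset.mem_univ, true_and, Fin.le_def, Fin.lt_def]
        rw [finRotate_val hr]
        constructor
        · rintro ⟨h1, h2⟩
          split_ifs at h2 with h3
          · omega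
          · omega
        · intro hx
          constructor
          · omega
          · rw [if_pos (by omega)]; omega
      rw [hσ, card_lt_filter]
      have hji : j ≤ i := by simp only [Fin.le_def]; omega
      exact le_trans (le_refl _) (filter_lower hτ i j hji)
  · have hi' : ∀ x : Fin r, x ≤ i := fun x => by
      simp only [Fin.le_def]; omega
    have e1 : (Finset.univ.filter fun x => x ≤ i ∧ finRotate r x ≤ j) =
        Finset.univ.filter fun x => finRotate r x ≤ j := by
      ext x; simp [hi' x]
    have e2 : (Finset.univ.filter fun x => x ≤ i ∧ τ x ≤ j) =
        Finset.univ.filter fun x => τ x ≤ j := by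
      ext x; simp [hi' x]
    rw [e1, e2, card_preim, card_preim]

lemma small_of_bruhat {r : ℕ} (hr : 1 < r) {τ : Equiv.Perm (Fin r)}
    (h : bruhatLE τ (finRotate r)) : small τ := by
  intro x
  rcases Nat.lt_or_ge ((x:ℕ)+1) r with hx | hx
  · set j : Fin r := ⟨(x:ℕ)+1, hx⟩ with hj
    have h1 := h x j
    have hσ : (Finset.univ.filter fun z => z ≤ x ∧ finRotate r z ≤ j) =
        Finset.univ.filter fun z : Fin r => z ≤ x := by
      ext z
      simp only [Finset.mem_filter, Finset.mem_univ, true_and, and_iff_left_iff_imp, Fin.le_def]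
      rw [finRotate_val hr]
      intro hz
      split_ifs with h3
      · have hjv : ((⟨(x:ℕ)+1, hx⟩ : Fin r) : ℕ) = (x:ℕ)+1 := rfl; omega
      · omega
    rw [hσ, card_le_filter] at h1
    have hsub : (Finset.univ.filter fun z => z ≤ x ∧ τ z ≤ j) ⊆
        Finset.univ.filter fun z : Fin r => z ≤ x := by
      intro z hz
      simp only [Finset.mem_filter, Finset.mem_univ, true_and] at hz ⊢
      exact hz.1
    have heq := Finset.eq_of_subset_of_card_le hsub (by rw [card_le_filter]; exact h1)
    have hx' : x ∈ Finset.univ.filter fun z : Fin r => z ≤ x := by simp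
    rw [← heq] at hx'
    simp only [Finset.mem_filter, Finset.mem_univ, true_and, Fin.le_def] at hx'
    have := hx'.2
    omega
  · have := (τ x).isLt; omega

lemma exists_escape {r : ℕ} {ρ : Equiv.Perm (Fin r)} (hρ : small ρ) {i j : Fin r} (hji : j ≤ i)
    (hfull : ∀ k : Fin r, (j:ℕ) ≤ (k:ℕ) → (k:ℕ) ≤ (i:ℕ) → (ρ k : ℕ) = (k:ℕ)+1) :
    ∃ y : Fin r, (i:ℕ) < (y:ℕ) ∧ (ρ y : ℕ) ≤ (j:ℕ) := by
  by_contra hcon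
  push_neg at hcon
  have hsub : (Finset.univ.filter fun x => ρ x ≤ j) ⊆
      Finset.univ.filter fun x : Fin r => x < j := by
    intro x hx
    simp only [Finset.mem_filter, Finset.mem_univ, true_and, Fin.le_def, Fin.lt_def] at hx ⊢
    have hj : (j:ℕ) ≤ (i:ℕ) := hji
    rcases Nat.lt_or_ge (i:ℕ) (x:ℕ) with h|h
    · have := hcon x h; omega
    · rcases Nat.lt_or_ge (x:ℕ) (j:ℕ) with h2|h2
      · exact h2
      · have := hfull x h2 h; omega
  have hcard := Finset.card_le_card hsub
  rw [card_preim, card_lt_filter] at hcard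
  omega

lemma bruhat_mono_S {r : ℕ} {τ ρ : Equiv.Perm (Fin r)} (hτ : small τ) (hρ : small ρ)
    (h : bruhatLE τ ρ) : ∀ k : Fin r, (τ k:ℕ) = (k:ℕ)+1 → (ρ k:ℕ) = (k:ℕ)+1 := by
  intro k hk
  have h1 := h k k
  have hτk : (Finset.univ.filter fun x => x ≤ k ∧ τ x ≤ k) =
      Finset.univ.filter fun x : Fin r => x < k := by
    ext x
    simp only [Finset.mem_filter, Finset.mem_univ, true_and, Fin.le_def, Fin.lt_def]
    constructor
    · rintro ⟨h2, h3⟩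
      rcases Nat.lt_or_ge (x:ℕ) (k:ℕ) with h4|h4
      · exact h4
      · have hxk : x = k := Fin.ext (by omega)
        subst hxk; omega
    · intro hx
      have := hτ x
      omega
  rw [hτk, card_lt_filter] at h1
  by_contra hcon
  have hρk : (ρ k : ℕ) ≤ (k:ℕ) := by have := hρ k; omega
  have hfull : (Finset.univ.filter fun x => x ≤ k ∧ ρ x ≤ k) =
      Finset.univ.filter fun x : Fin r => x ≤ k := by
    ext x
    simp only [Finset.mem_filter, Finset.mem_univ, true_and, and_iff_left_iff_imp, Fin.le_def]
    intro hx
    rcases Nat.lt_or_ge (x:ℕ) (k:ℕ) with h4|h4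
    · have := hρ x; omega
    · have hxk : x = k := Fin.ext (by omega)
      subst hxk; omega
  rw [hfull, card_le_filter] at h1
  omega

lemma bruhat_of_S_mono {r : ℕ} {τ ρ : Equiv.Perm (Fin r)} (hτ : small τ) (hρ : small ρ)
    (h : ∀ k : Fin r, (τ k:ℕ) = (k:ℕ)+1 → (ρ k:ℕ) = (k:ℕ)+1) : bruhatLE τ ρ := by
  intro i j
  rcases Nat.lt_or_ge (i:ℕ) (j:ℕ) with hij | hij
  · have hfull : (Finset.univ.filter fun x => x ≤ i ∧ τ x ≤ j) =
        Finset.univ.filter fun x : Fin r => x ≤ i := by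
      ext x
      simp only [Finset.mem_filter, Finset.mem_univ, true_and, and_iff_left_iff_imp, Fin.le_def]
      intro hx
      have := hτ x
      omega
    rw [hfull, card_le_filter]
    calc (Finset.univ.filter fun x => x ≤ i ∧ ρ x ≤ j).card
        ≤ (Finset.univ.filter fun x : Fin r => x ≤ i).card := by
          apply Finset.card_le_card
          intro x hx
          simp only [Finset.mem_filter, Finset.mem_univ, true_and] at hx ⊢
          exact hx.1
      _ = (i:ℕ)+1 := card_le_filter i
  · have hji : j ≤ i := by simp only [Fin.le_def]; omega
    have hlow := filter_lower hτ i j hji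
    have hsubρ : (Finset.univ.filter fun x => x ≤ i ∧ ρ x ≤ j) ⊆
        Finset.univ.filter fun x => ρ x ≤ j := by
      intro x hx
      simp only [Finset.mem_filter, Finset.mem_univ, true_and] at hx ⊢
      exact hx.2
    rcases Nat.lt_or_ge (Finset.univ.filter fun x => x ≤ i ∧ ρ x ≤ j).card ((j:ℕ)+1) with hc | hc
    · omega
    · have heq := Finset.eq_of_subset_of_card_le hsubρ (by rw [card_preim]; exact hc)
      have hfullτ : ∀ x : Fin r, (τ x:ℕ) ≤ (j:ℕ) → (x:ℕ) ≤ (i:ℕ) := by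
        intro x hxj
        by_contra hxi
        push_neg at hxi
        have hrun : ∀ k : Fin r, (j:ℕ) ≤ (k:ℕ) → (k:ℕ) ≤ (i:ℕ) → (ρ k:ℕ) = (k:ℕ)+1 := by
          intro k h1 h2
          exact h k (run_of_escape hτ hxj k h1 (by omega))
        obtain ⟨y, hy1, hy2⟩ := exists_escape hρ hji hrun
        have hyP : y ∈ Finset.univ.filter fun x => ρ x ≤ j := by
          simp only [Finset.mem_filter, Finset.mem_univ, true_and, Fin.le_def]
          exact hy2
        rw [← heq] at hyP
        simp only [Finset.mem_filter, Finset.mem_univ, true_and, Fin.le_def] at hyP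
        omega
      have heqτ : (Finset.univ.filter fun x => x ≤ i ∧ τ x ≤ j) =
          Finset.univ.filter fun x => τ x ≤ j := by
        ext x
        simp only [Finset.mem_filter, Finset.mem_univ, true_and, and_iff_right_iff_imp, Fin.le_def]
        intro hx
        exact hfullτ x hx
      have hc2 := Finset.card_le_card hsubρ
      rw [heqτ, card_preim]
      rw [card_preim] at hc2
      omega

def runc (g : ℕ → Bool) : ℕ → ℕ
  | 0 => 0
  | x+1 => if g x then runc g x else x+1

lemma runc_le (g : ℕ → Bool) : ∀ x, runc g x ≤ x := by
  intro x
  induction x with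
  | zero => simp [runc]
  | succ x ih =>
    simp only [runc]
    split
    · omega
    · omega

lemma runc_eq (g : ℕ → Bool) : ∀ {y x : ℕ}, x < y → runc g y ≤ x →
    g x = true ∧ runc g y = runc g x := by
  intro y
  induction y with
  | zero => omega
  | succ y ih =>
    intro x hxy hle
    by_cases hg : g y = true
    · have hr : runc g (y+1) = runc g y := by simp [runc, hg]
      rw [hr] at hle ⊢
      rcases Nat.lt_or_ge x y with h|h
      · exact ih h hle
      · have hxy' : x = y := by omega
        subst hxy'
        exact ⟨hg, rfl⟩
    · have hr : runc g (y+1) = y+1 := by simp [runc, hg]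
      omega

lemma runc_run (g : ℕ → Bool) : ∀ {x k : ℕ}, runc g x ≤ k → k < x → g k = true := by
  intro x
  induction x with
  | zero => omega
  | succ x ih =>
    intro k h1 h2
    by_cases hg : g x = true
    · have hr : runc g (x+1) = runc g x := by simp [runc, hg]
      rcases Nat.lt_or_ge k x with h|h
      · exact ih (by omega) h
      · have : k = x := by omega
        subst this; exact hg
    · have hr : runc g (x+1) = x+1 := by simp [runc, hg]
      omega

lemma runc_pred (g : ℕ → Bool) : ∀ {x : ℕ}, 0 < runc g x → g (runc g x - 1) = false := by
  intro x
  induction x with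
  | zero => simp [runc]
  | succ x ih =>
    intro h
    by_cases hg : g x = true
    · have hr : runc g (x+1) = runc g x := by simp [runc, hg]
      rw [hr] at h ⊢
      exact ih h
    · have hr : runc g (x+1) = x+1 := by simp [runc, hg]
      rw [hr]
      simpa using (Bool.not_eq_true _).mp hg

def mkFun (r : ℕ) (g : ℕ → Bool) (x : Fin r) : Fin r :=
  if h : (x:ℕ)+1 < r ∧ g (x:ℕ) = true then ⟨(x:ℕ)+1, h.1⟩
  else ⟨runc g (x:ℕ), lt_of_le_of_lt (runc_le g (x:ℕ)) x.isLt⟩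

lemma mkFun_inj (r : ℕ) (g : ℕ → Bool) : Function.Injective (mkFun r g) := by
  intro a b hab
  unfold mkFun at hab
  by_cases ha : (a:ℕ)+1 < r ∧ g (a:ℕ) = true <;>
    by_cases hb : (b:ℕ)+1 < r ∧ g (b:ℕ) = true
  · rw [dif_pos ha, dif_pos hb] at hab
    simp only [Fin.mk.injEq] at hab
    exact Fin.ext (by omega)
  · rw [dif_pos ha, dif_neg hb] at hab
    exfalso
    simp only [Fin.mk.injEq] at hab
    have h1 : (a:ℕ)+1 = runc g (b:ℕ) := hab
    have hrb := runc_le g (b:ℕ)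
    rcases lt_trichotomy ((a:ℕ)+1) (b:ℕ) with h|h|h
    · obtain ⟨hgx, heq⟩ := runc_eq g h (by omega)
      have : runc g ((a:ℕ)+1) = runc g (a:ℕ) := by simp [runc, ha.2]
      have := runc_le g (a:ℕ)
      omega
    · have h2 : runc g ((a:ℕ)+1) = runc g (a:ℕ) := by simp [runc, ha.2]
      rw [h] at h2
      have := runc_le g (a:ℕ)
      omega
    · omega
  · rw [dif_neg ha, dif_pos hb] at hab
    exfalso
    simp only [Fin.mk.injEq] at hab
    have h1 : (b:ℕ)+1 = runc g (a:ℕ) := hab.symm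
    have hra := runc_le g (a:ℕ)
    rcases lt_trichotomy ((b:ℕ)+1) (a:ℕ) with h|h|h
    · obtain ⟨hgx, heq⟩ := runc_eq g h (by omega)
      have : runc g ((b:ℕ)+1) = runc g (b:ℕ) := by simp [runc, hb.2]
      have := runc_le g (b:ℕ)
      omega
    · have h2 : runc g ((b:ℕ)+1) = runc g (b:ℕ) := by simp [runc, hb.2]
      rw [h] at h2
      have := runc_le g (b:ℕ)
      omega
    · omega
  · rw [dif_neg ha, dif_neg hb] at hab
    simp only [Fin.mk.injEq] at hab
    have h1 : runc g (a:ℕ) = runc g (b:ℕ) := hab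
    rcases lt_trichotomy ((a:ℕ)) ((b:ℕ)) with h|h|h
    · exfalso
      obtain ⟨hgx, heq⟩ := runc_eq g h (by have := runc_le g (a:ℕ); omega)
      exact ha ⟨by have := b.isLt; omega, hgx⟩
    · exact Fin.ext h
    · exfalso
      obtain ⟨hgx, heq⟩ := runc_eq g h (by have := runc_le g (b:ℕ); omega)
      exact hb ⟨by have := a.isLt; omega, hgx⟩

noncomputable def mk (r : ℕ) (g : ℕ → Bool) : Equiv.Perm (Fin r) :=
  Equiv.ofBijective _ (Finite.injective_iff_bijective.mp (mkFun_inj r g))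

lemma mk_apply (r : ℕ) (g : ℕ → Bool) (x : Fin r) : mk r g x = mkFun r g x := rfl

lemma mk_small (r : ℕ) (g : ℕ → Bool) : small (mk r g) := by
  intro x
  rw [mk_apply]
  unfold mkFun
  split
  · simp
  · simp only []
    have := runc_le g (x:ℕ)
    omega

lemma mk_S (r : ℕ) (g : ℕ → Bool) (x : Fin r) :
    ((mk r g x : ℕ) = (x:ℕ)+1) ↔ ((x:ℕ)+1 < r ∧ g (x:ℕ) = true) := by
  rw [mk_apply]
  unfold mkFun
  constructor
  · intro h
    by_contra hc
    rw [dif_neg hc] at h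
    simp only at h
    have := runc_le g (x:ℕ)
    omega
  · intro h
    rw [dif_pos h]

lemma small_eq_mk {r : ℕ} {τ : Equiv.Perm (Fin r)} (hτ : small τ) (g : ℕ → Bool)
    (hS : ∀ x : Fin r, ((τ x:ℕ) = (x:ℕ)+1) ↔ ((x:ℕ)+1 < r ∧ g (x:ℕ) = true)) :
    τ = mk r g := by
  apply Equiv.ext
  intro x
  by_cases hc : (x:ℕ)+1 < r ∧ g (x:ℕ) = true
  · have h1 : (τ x:ℕ) = (x:ℕ)+1 := (hS x).mpr hc
    have h2 : ((mk r g) x :ℕ) = (x:ℕ)+1 := (mk_S r g x).mpr hc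
    exact Fin.ext (by omega)
  · have h1 : (τ x:ℕ) ≠ (x:ℕ)+1 := fun h => hc ((hS x).mp h)
    have h1' : (τ x:ℕ) ≤ (x:ℕ) := by have := hτ x; omega
    have h2 : ((mk r g) x:ℕ) = runc g (x:ℕ) := by
      rw [mk_apply]; unfold mkFun; rw [dif_neg hc]
    refine Fin.ext ?_
    rw [h2]
    have hax : runc g (x:ℕ) ≤ (x:ℕ) := runc_le g (x:ℕ)
    have hrun : ∀ k : Fin r, runc g (x:ℕ) ≤ (k:ℕ) → (k:ℕ) < (x:ℕ) → (τ k:ℕ) = (k:ℕ)+1 := by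
      intro k h3 h4
      have hg : g (k:ℕ) = true := runc_run g h3 h4
      exact (hS k).mpr ⟨by have := x.isLt; omega, hg⟩
    have hge : runc g (x:ℕ) ≤ (τ x:ℕ) := by
      by_contra hlt
      push_neg at hlt
      have ha0 : 0 < runc g (x:ℕ) := by omega
      have hgm : g (runc g (x:ℕ) - 1) = false := runc_pred g ha0
      set m : Fin r := ⟨runc g (x:ℕ) - 1, by omega⟩ with hm
      have hmv : (m:ℕ) = runc g (x:ℕ) - 1 := rfl
      have hmle : (τ m : ℕ) ≤ (m:ℕ) := by
        have hsm := hτ m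
        have hne : (τ m:ℕ) ≠ (m:ℕ)+1 := by
          intro hh
          obtain ⟨_, hgm'⟩ := (hS m).mp hh
          rw [hmv] at hgm'
          rw [hgm'] at hgm
          exact Bool.noConfusion hgm
        omega
      have := noesc' hτ hmle x (by omega)
      omega
    have hle : (τ x:ℕ) ≤ runc g (x:ℕ) := by
      by_contra hgt
      push_neg at hgt
      set k : Fin r := ⟨(τ x:ℕ)-1, by omega⟩ with hk
      have hkv : (k:ℕ) = (τ x:ℕ)-1 := rfl
      have hτk : (τ k:ℕ) = (k:ℕ)+1 := hrun k (by omega) (by omega)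
      have hkx : τ k = τ x := Fin.ext (by omega)
      have := τ.injective hkx
      have : (k:ℕ) = (x:ℕ) := congrArg Fin.val this
      omega
    omega

lemma eq_of_S_eq {r : ℕ} {τ ρ : Equiv.Perm (Fin r)} (hτ : small τ) (hρ : small ρ)
    (h : ∀ k : Fin r, ((τ k:ℕ) = (k:ℕ)+1) ↔ ((ρ k:ℕ) = (k:ℕ)+1)) : τ = ρ := by
  classical
  set g : ℕ → Bool := fun m => if hm : m < r then decide ((τ ⟨m, hm⟩ : ℕ) = m+1) else false with hg
  have hSτ : ∀ x : Fin r, ((τ x:ℕ) = (x:ℕ)+1) ↔ ((x:ℕ)+1 < r ∧ g (x:ℕ) = true) := by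
    intro x
    constructor
    · intro hx
      refine ⟨by have := (τ x).isLt; omega, ?_⟩
      simp only [hg, x.isLt, dif_pos, Fin.eta]
      exact decide_eq_true hx
    · rintro ⟨h1, h2⟩
      simp only [hg, x.isLt, dif_pos, Fin.eta] at h2
      exact of_decide_eq_true h2
  have hSρ : ∀ x : Fin r, ((ρ x:ℕ) = (x:ℕ)+1) ↔ ((x:ℕ)+1 < r ∧ g (x:ℕ) = true) := by
    intro x
    rw [← h x]
    exact hSτ x
  rw [small_eq_mk hτ g hSτ, small_eq_mk hρ g hSρ]

lemma sigma_S {r : ℕ} (hr : 1 < r) (k : Fin r) :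
    ((finRotate r k : ℕ) = (k:ℕ)+1) ↔ (k:ℕ)+1 < r := by
  rw [finRotate_val hr]
  split_ifs with h
  · simp [h]
  · constructor
    · intro h2; exact h2.elim
    · intro h2; exact absurd h2 h

lemma sigma_small {r : ℕ} (hr : 1 < r) : small (finRotate r) := by
  intro x
  rw [finRotate_val hr]
  split_ifs <;> omega

lemma coatom_val {r : ℕ} (hr : 1 < r) {i : Fin r} (hi : (i:ℕ) < r-1) (k : Fin r) :
    ((finRotate r * Equiv.swap i ⟨r-1, by omega⟩) k : ℕ) =
      if k = i then 0 else if (k:ℕ) = r-1 then (i:ℕ)+1 else (k:ℕ)+1 := by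
  rw [Equiv.Perm.mul_apply]
  by_cases hki : k = i
  · subst hki
    rw [Equiv.swap_apply_left, if_pos rfl, finRotate_val hr,
      if_neg (by show ¬(r-1+1 < r); omega)]
  · by_cases hkl : (k:ℕ) = r-1
    · have hk : k = ⟨r-1, by omega⟩ := Fin.ext hkl
      rw [hk, Equiv.swap_apply_right, if_neg (by rw [← hk]; exact hki),
        if_pos (by simp), finRotate_val hr, if_pos (by omega)]
    · rw [Equiv.swap_apply_of_ne_of_ne hki (fun h => hkl (by rw [h])),
        if_neg hki, if_neg hkl, finRotate_val hr,
        if_pos (by have := k.isLt; omega)]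

lemma coatom_small {r : ℕ} (hr : 1 < r) {i : Fin r} (hi : (i:ℕ) < r-1) :
    small (finRotate r * Equiv.swap i ⟨r-1, by omega⟩) := by
  intro k
  rw [coatom_val hr hi k]
  split_ifs <;> omega

lemma coatom_S {r : ℕ} (hr : 1 < r) {i : Fin r} (hi : (i:ℕ) < r-1) (k : Fin r) :
    (((finRotate r * Equiv.swap i ⟨r-1, by omega⟩) k : ℕ) = (k:ℕ)+1) ↔
      ((k:ℕ)+1 < r ∧ k ≠ i) := by
  rw [coatom_val hr hi k]
  constructor
  · intro h
    by_cases h1 : k = i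
    · rw [if_pos h1] at h
      exact absurd h.symm (Nat.succ_ne_zero _)
    · rw [if_neg h1] at h
      by_cases h2 : (k:ℕ) = r-1
      · rw [if_pos h2] at h
        exact absurd h (by omega)
      · refine ⟨by have := k.isLt; omega, h1⟩
  · rintro ⟨h1, h2⟩
    rw [if_neg h2, if_neg (by omega)]

end Aux

theorem coxeter_interval_boolean (r : ℕ) (hr : 1 < r) :
    (∃ e : {τ : Equiv.Perm (Fin r) // bruhatLE τ (finRotate r)} ≃ (Fin (r - 1) → Bool),
      ∀ a b, bruhatLE a.1 b.1 ↔ e a ≤ e b) ∧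
    (∀ τ : Equiv.Perm (Fin r),
      (bruhatLE τ (finRotate r) ∧ τ ≠ finRotate r ∧
        ∀ ρ : Equiv.Perm (Fin r), bruhatLE τ ρ → bruhatLE ρ (finRotate r) →
          ρ = τ ∨ ρ = finRotate r) ↔
      (∃ i : Fin r, (i : ℕ) < r - 1 ∧
        τ = finRotate r * Equiv.swap i ⟨r - 1, by omega⟩)) := by
  classical
  constructor
  · refine ⟨⟨fun τp i => decide ((τp.1 ⟨(i:ℕ), lt_of_lt_of_le i.isLt (Nat.sub_le r 1)⟩ : ℕ) = (i:ℕ)+1),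
      fun G => ⟨mk r (fun m => if hm : m < r - 1 then G ⟨m, hm⟩ else false),
        bruhat_of_small hr (mk_small r _)⟩, ?_, ?_⟩, ?_⟩
    · rintro ⟨τ, hτb⟩
      have hτ : small τ := small_of_bruhat hr hτb
      apply Subtype.ext
      show mk r _ = τ
      symm
      apply small_eq_mk hτ
      intro x
      constructor
      · intro hx
        have hxr : (x:ℕ)+1 < r := by have := (τ x).isLt; omega
        have hm : (x:ℕ) < r - 1 := by omega
        refine ⟨hxr, ?_⟩
        rw [dif_pos hm]
        exact decide_eq_true hx
      · rintro ⟨h1, h2⟩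
        have hm : (x:ℕ) < r - 1 := by omega
        rw [dif_pos hm] at h2
        exact of_decide_eq_true h2
    · intro G
      funext i
      have hlt : (i:ℕ) < r := lt_of_lt_of_le i.isLt (Nat.sub_le r 1)
      simp only [Equiv.coe_fn_mk]
      have h1 : ((mk r (fun m => if hm : m < r-1 then G ⟨m,hm⟩ else false)
          (⟨(i:ℕ), lt_of_lt_of_le i.isLt (Nat.sub_le r 1)⟩ : Fin r) : ℕ) = (i:ℕ)+1) ↔ G i = true := by
        rw [mk_S]
        constructor
        · rintro ⟨_, h2⟩
          have h2' : (if hm : (i:ℕ) < r-1 then G ⟨(i:ℕ), hm⟩ else false) = true := h2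
          rw [dif_pos i.isLt] at h2'
          simpa using h2'
        · intro h2
          refine ⟨show (i:ℕ)+1 < r by have := i.isLt; omega, ?_⟩
          show (if hm : (i:ℕ) < r-1 then G ⟨(i:ℕ), hm⟩ else false) = true
          rw [dif_pos i.isLt]
          simpa using h2
      cases hG : G i
      · exact decide_eq_false (fun hp => by rw [hG] at h1; exact Bool.noConfusion (h1.mp hp))
      · exact decide_eq_true (h1.mpr hG)
    · intro a b
      have hτ := small_of_bruhat hr a.2
      have hρ := small_of_bruhat hr b.2
      simp only [Equiv.coe_fn_mk]
      constructor
      · intro hab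
        rw [Pi.le_def]
        intro i
        rw [Bool.le_iff_imp]
        simp only [decide_eq_true_eq]
        intro h
        exact bruhat_mono_S hτ hρ hab _ h
      · intro hle
        apply bruhat_of_S_mono hτ hρ
        intro k hk
        have hk1 : (k:ℕ) < r - 1 := by have := (a.1 k).isLt; omega
        have h2 := hle ⟨(k:ℕ), hk1⟩
        rw [Bool.le_iff_imp] at h2
        simp only [decide_eq_true_eq] at h2
        exact h2 hk
  · intro τ
    constructor
    · rintro ⟨hτb, hτne, hmax⟩
      have hτ : small τ := small_of_bruhat hr hτb
      have hσs : small (finRotate r) := sigma_small hr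
      by_cases hall : ∀ k : Fin r, (k:ℕ)+1 < r → (τ k:ℕ) = (k:ℕ)+1
      · exfalso
        apply hτne
        apply eq_of_S_eq hτ hσs
        intro k
        rw [sigma_S hr]
        constructor
        · intro h; have := (τ k).isLt; omega
        · intro h; exact hall k h
      · push_neg at hall
        obtain ⟨i, hi1, hi2⟩ := hall
        set g : ℕ → Bool := fun m => if hm : m < r then
          (decide ((τ ⟨m, hm⟩ : ℕ) = m+1) || decide (m = (i:ℕ))) else false with hg
        have hρ : small (mk r g) := mk_small r g
        have hτρ : bruhatLE τ (mk r g) := by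
          apply bruhat_of_S_mono hτ hρ
          intro k hk
          rw [mk_S]
          refine ⟨by have := (τ k).isLt; omega, ?_⟩
          show (if hm : (k:ℕ) < r then
            (decide ((τ ⟨(k:ℕ), hm⟩ : ℕ) = (k:ℕ)+1) || decide ((k:ℕ) = (i:ℕ))) else false) = true
          rw [dif_pos k.isLt, Bool.or_eq_true]
          exact Or.inl (decide_eq_true hk)
        have hρσ : bruhatLE (mk r g) (finRotate r) := bruhat_of_small hr hρ
        have hne : mk r g ≠ τ := by
          intro he
          apply hi2
          have hmm : ((mk r g i : ℕ) = (i:ℕ)+1) := by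
            rw [mk_S]
            refine ⟨hi1, ?_⟩
            show (if hm : (i:ℕ) < r then
              (decide ((τ ⟨(i:ℕ), hm⟩ : ℕ) = (i:ℕ)+1) || decide ((i:ℕ) = (i:ℕ))) else false) = true
            rw [dif_pos i.isLt, Bool.or_eq_true]
            exact Or.inr (decide_eq_true rfl)
          rw [he] at hmm
          exact hmm
        rcases hmax (mk r g) hτρ hρσ with h | h
        · exact absurd h hne
        · refine ⟨i, by omega, ?_⟩
          apply eq_of_S_eq hτ (coatom_small hr (show (i:ℕ) < r-1 by omega))
          intro k
          rw [coatom_S hr (show (i:ℕ) < r-1 by omega)]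
          constructor
          · intro hk
            refine ⟨by have := (τ k).isLt; omega, ?_⟩
            intro hki
            subst hki
            exact hi2 hk
          · rintro ⟨h1, h2⟩
            have hσk : ((mk r g) k : ℕ) = (k:ℕ)+1 := by rw [h]; exact (sigma_S hr k).mpr h1
            rw [mk_S] at hσk
            obtain ⟨_, hgk⟩ := hσk
            have hgk' : (if hm : (k:ℕ) < r then
              (decide ((τ ⟨(k:ℕ), hm⟩ : ℕ) = (k:ℕ)+1) || decide ((k:ℕ) = (i:ℕ))) else false) = true := hgk
            rw [dif_pos k.isLt, Bool.or_eq_true] at hgk'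
            rcases hgk' with h3 | h3
            · exact of_decide_eq_true h3
            · exact absurd (Fin.ext (of_decide_eq_true h3)) h2
    · rintro ⟨i, hi, rfl⟩
      have hco : small (finRotate r * Equiv.swap i ⟨r-1, by omega⟩) := coatom_small hr hi
      refine ⟨bruhat_of_small hr hco, ?_, ?_⟩
      · intro he
        have h0 : (((finRotate r * Equiv.swap i ⟨r-1, by omega⟩) i : Fin r) : ℕ) = 0 := by
          rw [coatom_val hr hi i, if_pos rfl]
        rw [he, finRotate_val hr, if_pos (by omega)] at h0
        omega
      · intro ρ hτρ hρσ
        have hρ : small ρ := small_of_bruhat hr hρσ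
        have hmono := bruhat_mono_S hco hρ hτρ
        by_cases hcase : (ρ i : ℕ) = (i:ℕ)+1
        · right
          apply eq_of_S_eq hρ (sigma_small hr)
          intro k
          rw [sigma_S hr]
          constructor
          · intro h2; have := (ρ k).isLt; omega
          · intro h1
            by_cases hki : k = i
            · subst hki; exact hcase
            · exact hmono k ((coatom_S hr hi k).mpr ⟨h1, hki⟩)
        · left
          apply eq_of_S_eq hρ hco
          intro k
          rw [coatom_S hr hi k]
          constructor
          · intro hk
            refine ⟨by have := (ρ k).isLt; omega, fun hki => ?_⟩
            subst hki
            exact hcase hk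
          · rintro ⟨h1, h2⟩
            exact hmono k ((coatom_S hr hi k).mpr ⟨h1, h2⟩)


end SmoothPerm
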